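/- Let b ≥ 2 be an integer. For any real numbers α and x with x ≥ 1, | ∑_{n ∈ 𝒫⁰_b(x)} e(αn) | ≤ b² · ∑_{0 ≤ N ≤ (1/2)log_b x} ∑_{0 ≤ M ≤ N} Φ_M(α b^{N−M}), where N and M run over integers. -/

import Mathlib

open Real

/-- `e(x) = exp(2πix)`. -/
noncomputable def eC (x : ℝ) : ℂ := Complex.exp (2 * Real.pi * Complex.I * x)

/-- `φ_b(α) = |∑_{0 ≤ m < b} e(αm)|`. -/
noncomputable def phiB (b : ℕ) (α : ℝ) : ℝ :=
  ‖∑ m ∈ Finset.range b, eC (α * m)‖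

/-- `Φ_N(α) = ∏_{1 ≤ n < N} φ_b(α(bⁿ + b^{2N-n}))`, equal to `1` for `N ≤ 1`. -/
noncomputable def PhiB (b N : ℕ) (α : ℝ) : ℝ :=
  ∏ n ∈ Finset.Ico 1 N, phiB b (α * ((b : ℝ) ^ n + (b : ℝ) ^ (2 * N - n)))

/-- `j`-th base-`b` digit of `t`. -/
def digA (b j t : ℕ) : ℕ := t / b ^ j % b

/-- weight of digit `j` in the palindrome with middle position `N`. -/
def wtA (b N j : ℕ) : ℕ := b ^ (N + j) + if j = 0 then 0 else b ^ (N - j)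

/-- The palindrome with upper half `t` (when `b^N ≤ t < b^(N+1)`). -/
def FA (b N t : ℕ) : ℕ := ∑ j ∈ Finset.range (N + 1), digA b j t * wtA b N j

/-- contribution of the digits above position `L`. -/
def GA (b N L v : ℕ) : ℕ := ∑ j ∈ Finset.Ico L (N + 1), digA b (j - L) v * wtA b N j

/-- full block sum. -/
noncomputable def BA (b N : ℕ) (α : ℝ) (M : ℕ) : ℂ :=
  ∑ s ∈ Finset.range (b ^ M), eC (α * FA b N s)

lemma eC_add (x y : ℝ) : eC (x + y) = eC x * eC y := by
  unfold eC
  rw [← Complex.exp_add]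
  push_cast
  ring_nf

lemma norm_eC (x : ℝ) : ‖eC x‖ = 1 := by
  unfold eC
  rw [show 2 * Real.pi * Complex.I * (x : ℂ) = ((2 * Real.pi * x : ℝ) : ℂ) * Complex.I by
    push_cast; ring]
  exact Complex.norm_exp_ofReal_mul_I _

lemma eC_zero : eC 0 = 1 := by
  unfold eC; simp

lemma digA_lt {b : ℕ} (hb : 0 < b) (j t : ℕ) : digA b j t < b := Nat.mod_lt _ hb

lemma digA_eq_zero {b j t : ℕ} (h : t < b ^ j) : digA b j t = 0 := by
  unfold digA; rw [Nat.div_eq_of_lt h, Nat.zero_mod]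

lemma digA_add_mul_low {b : ℕ} (hb : 0 < b) {j L : ℕ} (hj : j < L) (v s : ℕ) :
    digA b j (v * b ^ L + s) = digA b j s := by
  unfold digA
  have h1 : b ^ L = b ^ (L - j) * b ^ j := by
    rw [← pow_add]; congr 1; omega
  rw [h1, ← mul_assoc, add_comm, Nat.add_mul_div_right _ _ (pow_pos hb j)]
  have h2 : b ^ (L - j) = b ^ (L - j - 1) * b := by
    rw [← pow_succ]; congr 1; omega
  rw [h2, ← mul_assoc, Nat.add_mul_mod_self_right]

lemma digA_high {b : ℕ} (hb : 0 < b) {L s : ℕ} (hs : s < b ^ L) (k v : ℕ) :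
    digA b (L + k) (v * b ^ L + s) = digA b k v := by
  unfold digA
  rw [pow_add, ← Nat.div_div_eq_div_mul]
  congr 2
  rw [add_comm, Nat.add_mul_div_right _ _ (pow_pos hb L),
    Nat.div_eq_of_lt hs, zero_add]

lemma mod_pow_eq_sum {b : ℕ} (hb : 0 < b) (k t : ℕ) :
    t % b ^ k = ∑ j ∈ Finset.range k, digA b j t * b ^ j := by
  induction k with
  | zero => simp [Nat.mod_one]
  | succ k ih =>
    rw [Finset.sum_range_succ, ← ih, pow_succ, Nat.mod_mul]
    unfold digA
    ring

lemma self_eq_sum_digA {b : ℕ} (hb : 0 < b) {k t : ℕ} (ht : t < b ^ k) :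
    t = ∑ j ∈ Finset.range k, digA b j t * b ^ j := by
  rw [← mod_pow_eq_sum hb, Nat.mod_eq_of_lt ht]

lemma FA_split {b N L : ℕ} (hb : 0 < b) (hL : L ≤ N + 1) {s : ℕ} (hs : s < b ^ L) (v : ℕ) :
    FA b N (v * b ^ L + s) = GA b N L v + FA b N s := by
  have hFs : FA b N s = ∑ j ∈ Finset.Ico 0 L, digA b j s * wtA b N j := by
    unfold FA
    rw [Finset.range_eq_Ico]
    refine (Finset.sum_subset ?_ ?_).symm
    · exact Finset.Ico_subset_Ico le_rfl hL
    · intro j hj hj'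
      simp only [Finset.mem_Ico] at hj hj'
      have : s < b ^ j := lt_of_lt_of_le hs (Nat.pow_le_pow_right hb (by omega))
      rw [digA_eq_zero this, zero_mul]
  have h1 : ∑ j ∈ Finset.Ico 0 L, digA b j (v * b ^ L + s) * wtA b N j
      = FA b N s := by
    rw [hFs]
    refine Finset.sum_congr rfl fun j hj => ?_
    simp only [Finset.mem_Ico] at hj
    rw [digA_add_mul_low hb hj.2]
  have h2 : ∑ j ∈ Finset.Ico L (N + 1), digA b j (v * b ^ L + s) * wtA b N j
      = GA b N L v := by
    unfold GA
    refine Finset.sum_congr rfl fun j hj => ?_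
    simp only [Finset.mem_Ico] at hj
    have hj' : j = L + (j - L) := by omega
    rw [hj', digA_high hb hs, Nat.add_sub_cancel_left]
  calc FA b N (v * b ^ L + s)
      = ∑ j ∈ Finset.Ico 0 (N + 1), digA b j (v * b ^ L + s) * wtA b N j := by
        unfold FA; rw [Finset.range_eq_Ico]
    _ = GA b N L v + FA b N s := by
        rw [← Finset.sum_Ico_consecutive _ (Nat.zero_le L) hL, h1, h2, add_comm]

lemma GA_single {b N M e : ℕ} (hb : 0 < b) (hM : M ≤ N) (he : e < b) :
    GA b N M e = e * wtA b N M := by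
  unfold GA
  rw [Finset.sum_eq_single M]
  · simp only [Nat.sub_self]
    unfold digA
    rw [pow_zero, Nat.div_one, Nat.mod_eq_of_lt he]
  · intro j hj hne
    simp only [Finset.mem_Ico] at hj
    have : e < b ^ (j - M) := by
      calc e < b := he
      _ = b ^ 1 := (pow_one b).symm
      _ ≤ b ^ (j - M) := Nat.pow_le_pow_right hb (by omega)
    rw [digA_eq_zero this, zero_mul]
  · intro h
    exact absurd (Finset.mem_Ico.mpr ⟨le_rfl, by omega⟩) h

lemma sum_Ico_block (g : ℕ → ℂ) (a K : ℕ) (q : ℕ) :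
    ∑ t ∈ Finset.Ico a (a + q * K), g t
      = ∑ i ∈ Finset.range q, ∑ t ∈ Finset.Ico (a + i * K) (a + i * K + K), g t := by
  induction q with
  | zero => simp
  | succ q ih =>
    rw [Finset.sum_range_succ, ← ih, Finset.sum_Ico_consecutive]
    · congr 1; ring
    · omega
    · nlinarith [Nat.zero_le K]

lemma block_sum {b N L : ℕ} {α : ℝ} (hb : 0 < b) (hL : L ≤ N + 1) (v : ℕ) :
    ∑ t ∈ Finset.Ico (v * b ^ L) (v * b ^ L + b ^ L), eC (α * FA b N t)
      = eC (α * GA b N L v) * BA b N α L := by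
  rw [Finset.sum_Ico_eq_sum_range, Nat.add_sub_cancel_left]
  unfold BA
  rw [Finset.mul_sum]
  refine Finset.sum_congr rfl fun s hs => ?_
  simp only [Finset.mem_range] at hs
  rw [FA_split hb hL hs v]
  rw [← eC_add]
  congr 1
  push_cast
  ring

lemma block_norm {b N L : ℕ} {α : ℝ} (hb : 0 < b) (hL : L ≤ N + 1) (v : ℕ) :
    ‖∑ t ∈ Finset.Ico (v * b ^ L) (v * b ^ L + b ^ L), eC (α * FA b N t)‖ = ‖BA b N α L‖ := by
  rw [block_sum hb hL v, norm_mul, norm_eC, one_mul]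

lemma FA_zero (b N : ℕ) : FA b N 0 = 0 := by
  unfold FA
  refine Finset.sum_eq_zero fun j _ => ?_
  unfold digA
  simp

lemma BA_zero (b N : ℕ) (α : ℝ) : BA b N α 0 = 1 := by
  unfold BA
  simp [FA_zero, eC_zero]

lemma BA_succ {b N M : ℕ} {α : ℝ} (hb : 0 < b) (hM : M ≤ N) :
    BA b N α (M + 1) = (∑ m ∈ Finset.range b, eC ((α * wtA b N M) * m)) * BA b N α M := by
  unfold BA
  rw [show Finset.range (b ^ (M + 1)) = Finset.Ico 0 (0 + b * b ^ M) by
    rw [Finset.range_eq_Ico, zero_add, pow_succ, mul_comm (b ^ M) b]]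
  rw [sum_Ico_block, Finset.sum_mul]
  refine Finset.sum_congr rfl fun i hi => ?_
  simp only [Finset.mem_range] at hi
  rw [zero_add, block_sum hb (by omega) i, GA_single hb hM hi]
  congr 2
  push_cast
  ring

lemma norm_BA {b N : ℕ} {α : ℝ} (hb : 0 < b) :
    ∀ M, M ≤ N + 1 → ‖BA b N α M‖ = ∏ i ∈ Finset.range M, phiB b (α * wtA b N i) := by
  intro M
  induction M with
  | zero => intro _; simp [BA_zero]
  | succ M ih =>
    intro hM
    rw [BA_succ hb (by omega), norm_mul, Finset.prod_range_succ, ih (by omega), mul_comm]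
    rfl

lemma phiB_nonneg (b : ℕ) (β : ℝ) : 0 ≤ phiB b β := norm_nonneg _

lemma PhiB_nonneg (b N : ℕ) (β : ℝ) : 0 ≤ PhiB b N β :=
  Finset.prod_nonneg fun _ _ => phiB_nonneg _ _

lemma phiB_le (b : ℕ) (β : ℝ) : phiB b β ≤ b := by
  unfold phiB
  calc ‖∑ m ∈ Finset.range b, eC (β * m)‖ ≤ ∑ m ∈ Finset.range b, ‖eC (β * m)‖ :=
        norm_sum_le _ _
  _ = b := by simp only [norm_eC]; simp

lemma prod_wt_eq_PhiB {b N M : ℕ} {α : ℝ} (hb : 2 ≤ b) (hM : M ≤ N) :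
    ∏ i ∈ Finset.Ico 1 M, phiB b (α * wtA b N i)
      = PhiB b M (α * (b : ℝ) ^ (N - M)) := by
  unfold PhiB
  refine Finset.prod_nbij' (fun i => M - i) (fun n => M - n) ?_ ?_ ?_ ?_ ?_
  · intro i hi; simp only [Finset.mem_Ico] at hi ⊢; omega
  · intro n hn; simp only [Finset.mem_Ico] at hn ⊢; omega
  · intro i hi; simp only [Finset.mem_Ico] at hi; omega
  · intro n hn; simp only [Finset.mem_Ico] at hn; omega
  · intro i hi
    simp only [Finset.mem_Ico] at hi
    congr 1
    unfold wtA
    have hi0 : i ≠ 0 := by omega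
    simp only [hi0, if_neg hi0]
    push_cast
    have e1 : (b : ℝ) ^ (N - M) * (b : ℝ) ^ (M - i) = (b : ℝ) ^ (N - i) := by
      rw [← pow_add]; congr 1; omega
    have e2 : (b : ℝ) ^ (N - M) * (b : ℝ) ^ (2 * M - (M - i)) = (b : ℝ) ^ (N + i) := by
      rw [← pow_add]; congr 1; omega
    rw [mul_assoc, mul_add ((b:ℝ) ^ (N - M)), e1, e2]; ring

lemma norm_BA_le {b N M : ℕ} {α : ℝ} (hb : 2 ≤ b) (hM : M ≤ N) :
    ‖BA b N α M‖ ≤ (b : ℝ) * PhiB b M (α * (b : ℝ) ^ (N - M)) := by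
  have hb0 : 0 < b := by omega
  rcases Nat.eq_zero_or_pos M with hM0 | hM0
  · subst hM0
    rw [BA_zero, norm_one]
    have : PhiB b 0 (α * (b : ℝ) ^ (N - 0)) = 1 := by unfold PhiB; simp
    rw [this, mul_one]
    exact_mod_cast by omega
  · rw [norm_BA hb0 M (by omega), Finset.range_eq_Ico,
      Finset.prod_eq_prod_Ico_succ_bot hM0, ← prod_wt_eq_PhiB hb hM]
    have h2 : (0:ℝ) ≤ ∏ i ∈ Finset.Ico 1 M, phiB b (α * wtA b N i) :=
      Finset.prod_nonneg fun _ _ => phiB_nonneg _ _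
    exact mul_le_mul_of_nonneg_right (phiB_le _ _) h2

lemma lemD {b N : ℕ} {α : ℝ} (hb : 2 ≤ b) :
    ∀ M, M ≤ N + 1 → ∀ w r, r ≤ b * b ^ M →
    ‖∑ t ∈ Finset.Ico (w * b ^ M) (w * b ^ M + r), eC (α * FA b N t)‖ ≤
      (∑ j ∈ Finset.range (M + 1), (b : ℝ) * ‖BA b N α j‖) + 1 := by
  have hb0 : 0 < b := by omega
  intro M
  induction M with
  | zero =>
    intro _ w r hr
    simp only [pow_zero, mul_one] at hr ⊢
    calc ‖∑ t ∈ Finset.Ico w (w + r), eC (α * FA b N t)‖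
        ≤ ∑ t ∈ Finset.Ico w (w + r), ‖eC (α * FA b N t)‖ := norm_sum_le _ _
      _ = r := by simp only [norm_eC]; simp
      _ ≤ b := by exact_mod_cast hr
      _ ≤ _ := by
          rw [Finset.sum_range_one, BA_zero, norm_one, mul_one]
          linarith
  | succ M ih =>
    intro hM w r hr
    set q := r / b ^ (M + 1) with hqdef
    set r0 := r % b ^ (M + 1) with hr0def
    have hq : q ≤ b := by
      rw [hqdef]
      calc r / b ^ (M+1) ≤ b * b ^ (M+1) / b ^ (M+1) := Nat.div_le_div_right hr
        _ = b := Nat.mul_div_cancel _ (pow_pos hb0 _)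
    have hrsplit : r = q * b ^ (M + 1) + r0 := by
      rw [hqdef, hr0def, mul_comm]; exact (Nat.div_add_mod _ _).symm
    have hr0 : r0 ≤ b * b ^ M := by
      have : r0 < b ^ (M + 1) := Nat.mod_lt _ (pow_pos hb0 _)
      rw [pow_succ, mul_comm (b ^ M) b] at this
      omega
    have hsplit : ∑ t ∈ Finset.Ico (w * b ^ (M+1)) (w * b ^ (M+1) + r), eC (α * FA b N t)
        = (∑ t ∈ Finset.Ico (w * b ^ (M+1)) (w * b ^ (M+1) + q * b ^ (M+1)),
            eC (α * FA b N t))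
          + ∑ t ∈ Finset.Ico (w * b ^ (M+1) + q * b ^ (M+1))
              (w * b ^ (M+1) + q * b ^ (M+1) + r0), eC (α * FA b N t) := by
      rw [show w * b ^ (M+1) + r = w * b ^ (M+1) + q * b ^ (M+1) + r0 from by
        rw [hrsplit]; ring]
      exact (Finset.sum_Ico_consecutive _ (Nat.le_add_right _ _) (Nat.le_add_right _ _)).symm
    rw [hsplit]
    have hfirst : ‖∑ t ∈ Finset.Ico (w * b ^ (M+1)) (w * b ^ (M+1) + q * b ^ (M+1)),
        eC (α * FA b N t)‖ ≤ (b : ℝ) * ‖BA b N α (M+1)‖ := by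
      rw [sum_Ico_block]
      calc ‖∑ i ∈ Finset.range q, ∑ t ∈ Finset.Ico (w * b^(M+1) + i * b^(M+1))
              (w * b^(M+1) + i * b^(M+1) + b^(M+1)), eC (α * FA b N t)‖
          ≤ ∑ i ∈ Finset.range q, ‖∑ t ∈ Finset.Ico (w * b^(M+1) + i * b^(M+1))
              (w * b^(M+1) + i * b^(M+1) + b^(M+1)), eC (α * FA b N t)‖ := norm_sum_le _ _
        _ = ∑ i ∈ Finset.range q, ‖BA b N α (M+1)‖ := by
            refine Finset.sum_congr rfl fun i _ => ?_
            have : w * b^(M+1) + i * b^(M+1) = (w + i) * b^(M+1) := by ring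
            rw [this, block_norm hb0 hM]
        _ = (q : ℝ) * ‖BA b N α (M+1)‖ := by
            rw [Finset.sum_const, Finset.card_range, nsmul_eq_mul]
        _ ≤ (b : ℝ) * ‖BA b N α (M+1)‖ := by
            have : (q:ℝ) ≤ b := by exact_mod_cast hq
            exact mul_le_mul_of_nonneg_right this (norm_nonneg _)
    have hsecond : ‖∑ t ∈ Finset.Ico (w * b ^ (M+1) + q * b ^ (M+1))
        (w * b ^ (M+1) + q * b ^ (M+1) + r0), eC (α * FA b N t)‖
        ≤ (∑ j ∈ Finset.range (M + 1), (b : ℝ) * ‖BA b N α j‖) + 1 := by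
      have hstart : w * b ^ (M+1) + q * b ^ (M+1) = ((w + q) * b) * b ^ M := by
        rw [pow_succ]; ring
      rw [hstart]
      exact ih (by omega) ((w + q) * b) r0 hr0
    calc ‖_ + _‖ ≤ _ + _ := norm_add_le _ _
      _ ≤ (b : ℝ) * ‖BA b N α (M+1)‖
          + ((∑ j ∈ Finset.range (M + 1), (b : ℝ) * ‖BA b N α j‖) + 1) :=
        add_le_add hfirst hsecond
      _ = _ := by conv_rhs => rw [Finset.sum_range_succ (fun j => (b:ℝ) * ‖BA b N α j‖) (M+1)]
                  ring

lemma digA_div (b j t : ℕ) : digA b (j + 1) t = digA b j (t / b) := by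
  unfold digA
  rw [Nat.div_div_eq_div_mul, ← pow_succ']

lemma ofDigits_reverse {b : ℕ} (hb : 2 ≤ b) :
    ∀ u : ℕ, u ≠ 0 → Nat.ofDigits b (Nat.digits b u).reverse
      = ∑ i ∈ Finset.range (Nat.log b u + 1), digA b i u * b ^ (Nat.log b u - i) := by
  have hb1 : 1 < b := hb
  intro u
  induction u using Nat.strong_induction_on with
  | _ u ih =>
    intro hu
    rcases lt_or_ge u b with hub | hub
    · rw [Nat.digits_of_lt b u hu hub, Nat.log_of_lt hub]
      simp [digA, Nat.mod_eq_of_lt hub]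
    · have hu0 : 0 < u := Nat.pos_of_ne_zero hu
      have hdiv0 : u / b ≠ 0 := by
        have := Nat.div_pos hub (by omega)
        omega
      have hlt : u / b < u := Nat.div_lt_self hu0 hb1
      have hK : Nat.log b u = Nat.log b (u / b) + 1 := by
        have h1 := Nat.log_div_base b u
        have h2 : 0 < Nat.log b u := Nat.log_pos hb1 hub
        omega
      set K := Nat.log b (u / b) with hKdef
      rw [Nat.digits_def' hb1 hu0, List.reverse_cons, Nat.ofDigits_append,
        ih (u / b) hlt hdiv0, Nat.ofDigits_singleton, List.length_reverse,
        Nat.digits_len b (u / b) hb1 hdiv0, hK]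
      rw [Finset.sum_range_succ' (fun i => digA b i u * b ^ (K + 1 - i)) (K + 1)]
      have hlast : digA b 0 u * b ^ (K + 1 - 0) = b ^ (K + 1) * (u % b) := by
        unfold digA
        rw [pow_zero, Nat.div_one, Nat.sub_zero, mul_comm]
      rw [hlast]
      congr 1
      refine Finset.sum_congr rfl fun i hi => ?_
      rw [digA_div]
      have he : K + 1 - (i + 1) = K - i := by omega
      rw [he]

lemma FA_eq_ofDigits {b N t : ℕ} (hb : 2 ≤ b) (ht : Nat.log b t = N) (ht0 : t ≠ 0) :
    FA b N t = Nat.ofDigits b ((Nat.digits b t).tail.reverse ++ Nat.digits b t) := by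
  have hb1 : 1 < b := hb
  have hb0 : 0 < b := by omega
  have htlt : t < b ^ (N + 1) := by
    have := Nat.lt_pow_succ_log_self hb1 t
    rwa [ht] at this
  have hlen : (Nat.digits b t).length = N + 1 := by
    rw [Nat.digits_len b t hb1 ht0, ht]
  rw [Nat.ofDigits_append, List.length_reverse, List.length_tail, hlen,
    Nat.add_sub_cancel, Nat.ofDigits_digits]
  have hFsplit : FA b N t
      = (∑ j ∈ Finset.range (N + 1), digA b j t * (if j = 0 then 0 else b ^ (N - j)))
        + b ^ N * t := by
    unfold FA wtA
    have hterm : ∀ j, digA b j t * (b ^ (N + j) + if j = 0 then 0 else b ^ (N - j))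
        = digA b j t * (if j = 0 then 0 else b ^ (N - j)) + digA b j t * b ^ (N + j) :=
      fun j => by ring
    simp only [hterm]
    rw [Finset.sum_add_distrib]
    congr 1
    have h2 : ∑ j ∈ Finset.range (N + 1), digA b j t * b ^ (N + j)
        = b ^ N * ∑ j ∈ Finset.range (N + 1), digA b j t * b ^ j := by
      rw [Finset.mul_sum]
      refine Finset.sum_congr rfl fun j _ => ?_
      rw [pow_add]; ring
    rw [h2, ← self_eq_sum_digA hb0 htlt]
  rw [hFsplit]
  congr 1
  -- lower sum equals ofDigits of reversed tail
  rcases Nat.eq_zero_or_pos N with hN0 | hN0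
  · subst hN0
    have htb : t < b := by
      have : t < b ^ 1 := htlt
      simpa using this
    rw [Nat.digits_of_lt b t ht0 htb]
    simp
  · have hbt : b ≤ t := by
      have h1 : b ^ N ≤ t := by
        have := Nat.pow_log_le_self b ht0
        rwa [ht] at this
      calc b = b ^ 1 := (pow_one b).symm
        _ ≤ b ^ N := Nat.pow_le_pow_right hb0 hN0
        _ ≤ t := h1
    have hdiv0 : t / b ≠ 0 := by
      have := Nat.div_pos hbt hb0
      omega
    have hKlog : Nat.log b (t / b) = N - 1 := by
      rw [Nat.log_div_base, ht]
    have htail : (Nat.digits b t).tail = Nat.digits b (t / b) := by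
      rw [Nat.digits_def' hb1 (Nat.pos_of_ne_zero ht0)]
      rfl
    rw [htail, ofDigits_reverse hb (t / b) hdiv0, hKlog]
    have hN1 : N - 1 + 1 = N := by omega
    rw [hN1]
    rw [Finset.sum_range_succ'
      (fun j => digA b j t * (if j = 0 then 0 else b ^ (N - j))) N]
    have hz : (digA b 0 t * if (0:ℕ) = 0 then (0:ℕ) else b ^ (N - 0)) = 0 := by simp
    rw [hz, add_zero]
    refine Finset.sum_congr rfl fun i _ => ?_
    rw [if_neg (Nat.succ_ne_zero i), digA_div]
    have he : N - (i + 1) = N - 1 - i := by omega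
    rw [he]

lemma pal_list {α : Type*} (l : List α) (hl : l ≠ []) :
    (l.tail.reverse ++ l).reverse = l.tail.reverse ++ l := by
  rcases l with _ | ⟨a, s⟩
  · exact absurd rfl hl
  · simp [List.reverse_append]

lemma digits_FA {b N t : ℕ} (hb : 2 ≤ b) (ht : Nat.log b t = N) (ht0 : t ≠ 0) :
    Nat.digits b (FA b N t) = (Nat.digits b t).tail.reverse ++ Nat.digits b t := by
  have hb1 : 1 < b := hb
  rw [FA_eq_ofDigits hb ht ht0]
  refine Nat.digits_ofDigits b hb1 _ ?_ ?_
  · intro l hl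
    rcases List.mem_append.mp hl with h | h
    · exact Nat.digits_lt_base hb1 (List.mem_of_mem_tail (List.mem_reverse.mp h))
    · exact Nat.digits_lt_base hb1 h
  · intro h
    have hne : Nat.digits b t ≠ [] := Nat.digits_ne_nil_iff_ne_zero.mpr ht0
    rw [List.getLast_append]
    simp only [List.isEmpty_iff]
    rw [dif_neg hne]
    exact Nat.getLast_digit_ne_zero b ht0

lemma log_FA {b N t : ℕ} (hb : 2 ≤ b) (ht : Nat.log b t = N) (ht0 : t ≠ 0) :
    Nat.log b (FA b N t) = 2 * N := by
  have hb1 : 1 < b := hb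
  have hFA0 : FA b N t ≠ 0 := by
    intro h
    have := digits_FA hb ht ht0
    rw [h] at this
    simp only [Nat.digits_zero] at this
    have hne : Nat.digits b t ≠ [] := Nat.digits_ne_nil_iff_ne_zero.mpr ht0
    exact hne (List.append_eq_nil_iff.mp this.symm).2
  have hlen := Nat.digits_len b (FA b N t) hb1 hFA0
  rw [digits_FA hb ht ht0] at hlen
  have hlent : (Nat.digits b t).length = N + 1 := by
    rw [Nat.digits_len b t hb1 ht0, ht]
  rw [List.length_append, List.length_reverse, List.length_tail, hlent] at hlen
  omega

lemma pal_FA {b N t : ℕ} (hb : 2 ≤ b) (ht : Nat.log b t = N) (ht0 : t ≠ 0) :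
    (Nat.digits b (FA b N t)).reverse = Nat.digits b (FA b N t) := by
  rw [digits_FA hb ht ht0]
  exact pal_list _ (Nat.digits_ne_nil_iff_ne_zero.mpr ht0)

lemma FA_decomp {b N t : ℕ} (hb : 2 ≤ b) (ht : Nat.log b t = N) (ht0 : t ≠ 0) :
    FA b N t = Nat.ofDigits b (Nat.digits b t).tail.reverse + b ^ N * t
      ∧ Nat.ofDigits b (Nat.digits b t).tail.reverse < b ^ N := by
  have hb1 : 1 < b := hb
  have hlent : (Nat.digits b t).length = N + 1 := by
    rw [Nat.digits_len b t hb1 ht0, ht]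
  constructor
  · rw [FA_eq_ofDigits hb ht ht0, Nat.ofDigits_append, List.length_reverse,
      List.length_tail, hlent, Nat.add_sub_cancel, Nat.ofDigits_digits]
  · have := Nat.ofDigits_lt_base_pow_length (l := (Nat.digits b t).tail.reverse) hb1 ?_
    · rwa [List.length_reverse, List.length_tail, hlent, Nat.add_sub_cancel] at this
    · intro x hx
      exact Nat.digits_lt_base hb1 (List.mem_of_mem_tail (List.mem_reverse.mp hx))

lemma FA_le_FA {b N : ℕ} (hb : 2 ≤ b) {t t' : ℕ}
    (h1 : b ^ N ≤ t') (h2 : t' ≤ t) (h3 : t < b ^ (N + 1)) :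
    FA b N t' ≤ FA b N t := by
  have hb1 : 1 < b := hb
  have ht'0 : t' ≠ 0 := by
    have : 0 < b ^ N := pow_pos (by omega) _
    omega
  have ht0 : t ≠ 0 := by omega
  have hlt' : Nat.log b t' = N :=
    Nat.log_eq_of_pow_le_of_lt_pow h1 (lt_of_le_of_lt h2 h3)
  have hlt : Nat.log b t = N := Nat.log_eq_of_pow_le_of_lt_pow (le_trans h1 h2) h3
  obtain ⟨hd1, hd2⟩ := FA_decomp hb hlt' ht'0
  obtain ⟨hd3, hd4⟩ := FA_decomp hb hlt ht0
  rcases eq_or_lt_of_le h2 with rfl | hlt2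
  · exact le_rfl
  · rw [hd1, hd3]
    have : b ^ N * t' + b ^ N ≤ b ^ N * t := by
      have : t' + 1 ≤ t := hlt2
      nlinarith [pow_pos (show 0 < b by omega) N]
    omega

/-- A downward closed subset of `Ico a c` is an interval `Ico a T`. -/
lemma downward_Ico {S : Finset ℕ} {a c : ℕ} (hac : a ≤ c) (hS : S ⊆ Finset.Ico a c)
    (hdc : ∀ t ∈ S, ∀ s, a ≤ s → s ≤ t → s ∈ S) :
    ∃ T, a ≤ T ∧ T ≤ c ∧ S = Finset.Ico a T := by
  rcases S.eq_empty_or_nonempty with rfl | hne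
  · exact ⟨a, le_rfl, hac, by simp⟩
  · refine ⟨S.max' hne + 1, ?_, ?_, ?_⟩
    · have := hS (S.max'_mem hne)
      simp only [Finset.mem_Ico] at this
      omega
    · have := hS (S.max'_mem hne)
      simp only [Finset.mem_Ico] at this
      omega
    · ext s
      simp only [Finset.mem_Ico]
      constructor
      · intro hs
        have h1 := hS hs
        simp only [Finset.mem_Ico] at h1
        have h2 := S.le_max' s hs
        omega
      · rintro ⟨hs1, hs2⟩
        exact hdc _ (S.max'_mem hne) s hs1 (by omega)

lemma perN {b : ℕ} (hb : 2 ≤ b) (α : ℝ) (N X : ℕ) :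
    ‖∑ n ∈ (Finset.Icc 1 X).filter
        (fun n => (Nat.digits b n).reverse = Nat.digits b n ∧ Nat.log b n = 2 * N),
      eC (α * n)‖ ≤
    (b : ℝ) ^ 2 * ∑ M ∈ Finset.range (N + 1), PhiB b M (α * (b : ℝ) ^ (N - M)) := by
  have hb1 : 1 < b := hb
  have hb0 : 0 < b := by omega
  have hpowpos : 0 < b ^ N := pow_pos hb0 _
  set A := (Finset.Icc 1 X).filter
      (fun n => (Nat.digits b n).reverse = Nat.digits b n ∧ Nat.log b n = 2 * N) with hA
  set Q := (Finset.Ico (b ^ N) (b ^ (N + 1))).filter (fun t => FA b N t ≤ X) with hQ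
  -- membership facts for t ∈ Ico
  have htfacts : ∀ t, b ^ N ≤ t → t < b ^ (N + 1) →
      Nat.log b t = N ∧ t ≠ 0 := by
    intro t h1 h2
    have ht0 : t ≠ 0 := by omega
    exact ⟨Nat.log_eq_of_pow_le_of_lt_pow h1 h2, ht0⟩
  -- step 1 : change variables
  have hAfact : ∀ n ∈ A, (Nat.ofDigits b ((Nat.digits b n).drop N)) ∈ Q ∧
      FA b N (Nat.ofDigits b ((Nat.digits b n).drop N)) = n := by
      intro n hn
      simp only [hA, Finset.mem_filter, Finset.mem_Icc] at hn
      obtain ⟨⟨hn1, hn2⟩, hpal, hlog⟩ := hn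
      have hn0 : n ≠ 0 := by omega
      have hlenD : (Nat.digits b n).length = 2 * N + 1 := by
        rw [Nat.digits_len b n hb1 hn0, hlog]
      set D := Nat.digits b n with hD
      set t := Nat.ofDigits b (D.drop N) with ht
      have hdigt : Nat.digits b t = D.drop N := by
        refine Nat.digits_ofDigits b hb1 _ ?_ ?_
        · intro l hl
          exact Nat.digits_lt_base hb1 (List.mem_of_mem_drop hl)
        · intro h
          have hDne : D ≠ [] := by
            intro hD0
            rw [hD0] at hlenD
            simp at hlenD
          have h1 : (D.drop N).getLast? = D.getLast? := by
            conv_rhs => rw [← List.take_append_drop N D]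
            rw [List.getLast?_append_of_ne_nil _ h]
          rw [List.getLast?_eq_getLast_of_ne_nil h, List.getLast?_eq_getLast_of_ne_nil hDne]
            at h1
          rw [Option.some_inj.mp h1]
          exact Nat.getLast_digit_ne_zero b hn0
      have hlent : (Nat.digits b t).length = N + 1 := by
        rw [hdigt, List.length_drop, hlenD]
        omega
      have ht0 : t ≠ 0 := by
        intro h
        rw [h] at hlent
        simp at hlent
      have hlogt : Nat.log b t = N := by
        have := Nat.digits_len b t hb1 ht0
        omega
      have hFAt : FA b N t = n := by
        rw [FA_eq_ofDigits hb hlogt ht0, hdigt, List.tail_drop]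
        have hrev : (D.drop (N + 1)).reverse = D.take N := by
          have h1 : (D.take N).reverse = D.drop (N + 1) := by
            rw [List.reverse_take]
            · rw [hpal, hlenD]
              congr 1
              omega
          rw [← h1, List.reverse_reverse]
        rw [hrev, List.take_append_drop]
        exact Nat.ofDigits_digits b n
      simp only [hQ, Finset.mem_filter, Finset.mem_Ico]
      refine ⟨⟨⟨?_, ?_⟩, ?_⟩, hFAt⟩
      · have := Nat.pow_log_le_self b ht0
        rwa [hlogt] at this
      · have := Nat.lt_pow_succ_log_self hb1 t
        rwa [hlogt] at this
      · rw [hFAt]; exact hn2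
  have hsum : ∑ n ∈ A, eC (α * n) = ∑ t ∈ Q, eC (α * FA b N t) := by
    refine Finset.sum_nbij' (fun n => Nat.ofDigits b ((Nat.digits b n).drop N))
      (fun t => FA b N t) ?_ ?_ ?_ ?_ ?_
    · -- maps A into Q
      intro n hn
      exact (hAfact n hn).1
    · -- maps Q into A
      intro t htq
      simp only [hQ, Finset.mem_filter, Finset.mem_Ico] at htq
      obtain ⟨⟨h1, h2⟩, h3⟩ := htq
      obtain ⟨hlogt, ht0⟩ := htfacts t h1 h2
      have hFA0 : FA b N t ≠ 0 := by
        refine (Nat.digits_ne_nil_iff_ne_zero (b := b)).mp ?_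
        rw [digits_FA hb hlogt ht0]
        simp only [ne_eq, List.append_eq_nil_iff, not_and]
        intro _
        exact Nat.digits_ne_nil_iff_ne_zero.mpr ht0
      simp only [hA, Finset.mem_filter, Finset.mem_Icc]
      exact ⟨⟨by omega, h3⟩, pal_FA hb hlogt ht0, log_FA hb hlogt ht0⟩
    · -- left inverse
      intro n hn
      exact (hAfact n hn).2
    · -- right inverse
      intro t htq
      simp only [hQ, Finset.mem_filter, Finset.mem_Ico] at htq
      obtain ⟨⟨h1, h2⟩, h3⟩ := htq
      obtain ⟨hlogt, ht0⟩ := htfacts t h1 h2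
      rw [digits_FA hb hlogt ht0]
      have hlen : (Nat.digits b t).tail.reverse.length = N := by
        rw [List.length_reverse, List.length_tail, Nat.digits_len b t hb1 ht0, hlogt]
        omega
      rw [← hlen, List.drop_left, Nat.ofDigits_digits]
    · -- values agree
      intro n hn
      rw [(hAfact n hn).2]
  rw [hsum]
  -- step 2 : Q is an interval
  have hdc : ∀ t ∈ Q, ∀ s, b ^ N ≤ s → s ≤ t → s ∈ Q := by
    intro t ht s hs1 hs2
    simp only [hQ, Finset.mem_filter, Finset.mem_Ico] at ht ⊢
    exact ⟨⟨hs1, by omega⟩, le_trans (FA_le_FA hb hs1 hs2 ht.1.2) ht.2⟩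
  obtain ⟨T, hT1, hT2, hTeq⟩ := downward_Ico
    (Nat.pow_le_pow_right (by omega) (show N ≤ N + 1 by omega)) (Finset.filter_subset _ _) hdc
  rw [hQ, hTeq]
  have hIco : Finset.Ico (b ^ N) T = Finset.Ico (1 * b ^ N) (1 * b ^ N + (T - b ^ N)) := by
    congr 1 <;> omega
  rw [hIco]
  have hr : T - b ^ N ≤ b * b ^ N := by
    have hp : b ^ (N + 1) = b * b ^ N := by rw [pow_succ]; ring
    omega
  refine le_trans (lemD (N := N) hb N (by omega) 1 (T - b ^ N) hr) ?_
  -- step 3 : compare with PhiB sum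
  rw [Finset.sum_range_succ' (fun j => (b : ℝ) * ‖BA b N α j‖) N, Finset.mul_sum,
    Finset.sum_range_succ' (fun M => (b : ℝ) ^ 2 * PhiB b M (α * (b : ℝ) ^ (N - M))) N]
  have h0 : (b : ℝ) * ‖BA b N α 0‖ + 1 ≤ (b : ℝ) ^ 2 * PhiB b 0 (α * (b : ℝ) ^ (N - 0)) := by
    rw [BA_zero, norm_one, mul_one]
    have hPhi0 : PhiB b 0 (α * (b : ℝ) ^ (N - 0)) = 1 := by unfold PhiB; simp
    rw [hPhi0, mul_one]
    have hbr : (2 : ℝ) ≤ b := by exact_mod_cast hb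
    nlinarith
  have hterm : ∀ i ∈ Finset.range N, (b : ℝ) * ‖BA b N α (i + 1)‖
      ≤ (b : ℝ) ^ 2 * PhiB b (i + 1) (α * (b : ℝ) ^ (N - (i + 1))) := by
    intro i hi
    simp only [Finset.mem_range] at hi
    have h := norm_BA_le (α := α) hb (show i + 1 ≤ N by omega)
    have hb0' : (0 : ℝ) ≤ b := by positivity
    calc (b : ℝ) * ‖BA b N α (i + 1)‖
        ≤ (b : ℝ) * ((b : ℝ) * PhiB b (i + 1) (α * (b : ℝ) ^ (N - (i + 1)))) :=
          mul_le_mul_of_nonneg_left h hb0'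
      _ = (b : ℝ) ^ 2 * PhiB b (i + 1) (α * (b : ℝ) ^ (N - (i + 1))) := by ring
  have hsum_le : ∑ i ∈ Finset.range N, (b : ℝ) * ‖BA b N α (i + 1)‖
      ≤ ∑ i ∈ Finset.range N, (b : ℝ) ^ 2 * PhiB b (i + 1) (α * (b : ℝ) ^ (N - (i + 1))) :=
    Finset.sum_le_sum hterm
  linarith
/-- Exponential sums over palindromes with an odd number of digits are bounded by linear
combinations of the products `Φ_M`. -/
theorem exp_sum_over_palindromes_bound (b : ℕ) (hb : 2 ≤ b) (α x : ℝ) (hx : 1 ≤ x) :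
    ‖∑ n ∈ (Finset.Icc 1 ⌊x⌋₊).filter
        (fun n => (Nat.digits b n).reverse = Nat.digits b n ∧ Nat.log b n % 2 = 0),
      eC (α * n)‖ ≤
    (b : ℝ) ^ 2 * ∑ N ∈ Finset.range (⌊Real.logb b x / 2⌋₊ + 1), ∑ M ∈ Finset.range (N + 1),
      PhiB b M (α * (b : ℝ) ^ (N - M)) := by
  have hb1 : 1 < b := hb
  have hbR : (1 : ℝ) < b := by exact_mod_cast hb1
  have hx0 : 0 ≤ x := by linarith
  set X := ⌊x⌋₊ with hX
  set NN := ⌊Real.logb b x / 2⌋₊ with hNN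
  set A : ℕ → Finset ℕ := fun N => (Finset.Icc 1 X).filter
      (fun n => (Nat.digits b n).reverse = Nat.digits b n ∧ Nat.log b n = 2 * N) with hAdef
  have hsplit : (Finset.Icc 1 X).filter
      (fun n => (Nat.digits b n).reverse = Nat.digits b n ∧ Nat.log b n % 2 = 0)
      = (Finset.range (NN + 1)).biUnion A := by
    ext n
    simp only [Finset.mem_biUnion, Finset.mem_filter, Finset.mem_Icc, Finset.mem_range, hAdef]
    constructor
    · rintro ⟨⟨h1, h2⟩, hpal, heven⟩
      refine ⟨Nat.log b n / 2, ?_, ⟨h1, h2⟩, hpal, by omega⟩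
      have hn0 : n ≠ 0 := by omega
      have hle : (b : ℝ) ^ (Nat.log b n) ≤ x := by
        calc ((b : ℝ) ^ (Nat.log b n)) = ((b ^ (Nat.log b n) : ℕ) : ℝ) := by push_cast; ring
          _ ≤ (n : ℝ) := by exact_mod_cast Nat.pow_log_le_self b hn0
          _ ≤ (X : ℝ) := by exact_mod_cast h2
          _ ≤ x := Nat.floor_le hx0
      have hlogb : (Nat.log b n : ℝ) ≤ Real.logb b x := by
        have h3 : Real.logb b ((b : ℝ) ^ (Nat.log b n)) ≤ Real.logb b x :=
          Real.logb_le_logb_of_le hbR (by positivity) hle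
        rwa [Real.logb_pow, Real.logb_self_eq_one hbR, mul_one] at h3
      have : ((Nat.log b n / 2 : ℕ) : ℝ) ≤ Real.logb b x / 2 := by
        have h4 : ((Nat.log b n / 2 : ℕ) : ℝ) * 2 ≤ (Nat.log b n : ℝ) := by
          exact_mod_cast (by omega : (Nat.log b n / 2) * 2 ≤ Nat.log b n)
        linarith
      have := Nat.le_floor this
      omega
    · rintro ⟨N, hN, ⟨h1, h2⟩, hpal, hlog⟩
      exact ⟨⟨h1, h2⟩, hpal, by omega⟩
  rw [hsplit]
  have hdisj : (↑(Finset.range (NN + 1)) : Set ℕ).PairwiseDisjoint A := by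
    intro N _ N' _ hne
    simp only [Function.onFun, hAdef]
    rw [Finset.disjoint_left]
    intro n hn hn'
    simp only [Finset.mem_filter] at hn hn'
    omega
  rw [Finset.sum_biUnion hdisj]
  calc ‖∑ N ∈ Finset.range (NN + 1), ∑ n ∈ A N, eC (α * n)‖
      ≤ ∑ N ∈ Finset.range (NN + 1), ‖∑ n ∈ A N, eC (α * n)‖ := norm_sum_le _ _
    _ ≤ ∑ N ∈ Finset.range (NN + 1), (b : ℝ) ^ 2 *
          ∑ M ∈ Finset.range (N + 1), PhiB b M (α * (b : ℝ) ^ (N - M)) :=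
        Finset.sum_le_sum fun N _ => perN hb α N X
    _ = _ := by rw [Finset.mul_sum]
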